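/- arXiv:2502.05856 — 2 statements merged into one kernel-verified Lean document; each statement's English description precedes it below -/
import Mathlib

section
/- The product μ agrees with the geometric intersection of a stick and a point in general position: if a, c, b are integers with a < c < b and b − a < N, and X(a, b) = Σ_{i=a}^{b−1} S [i], then μ(X(a, b), P [c]) = P [c]. -/
/-- Basis elements of the one-dimensional enlarged complex of period `N`:
points `P a`, elemental sticks `S a` (the interval `[a, a+1]`), and
infinitesimal sticks `I a`. -/
inductive B (N : ℕ) : Type where
  | P : ZMod N → B N
  | S : ZMod N → B N
  | I : ZMod N → B N
  deriving DecidableEq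

/-- The enlarged one-dimensional chain complex: the free ℚ-vector space on `B N`. -/
abbrev EC (N : ℕ) : Type := B N →₀ ℚ

namespace B

variable {N : ℕ}

/-- Codimension: 1 for points, 0 for sticks and infinitesimal sticks. -/
def cod : B N → ℕ
  | P _ => 1
  | _ => 0

/-- Basis element viewed in `EC N`. -/
noncomputable def e (u : B N) : EC N := Finsupp.single u 1

/-- The transverse intersection product on basis elements. -/
noncomputable def muB : B N → B N → EC N
  | P _, P _ => 0
  | P a, S b => if b = a ∨ b = a - 1 then Finsupp.single (P a) (1/2) else 0
  | S b, P a => if b = a ∨ b = a - 1 then Finsupp.single (P a) (1/2) else 0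
  | P a, I b => if b = a then Finsupp.single (P a) (1/4) else 0
  | I b, P a => if b = a then Finsupp.single (P a) (1/4) else 0
  | S a, S b =>
      if b = a then
        Finsupp.single (I a) (-1) + Finsupp.single (S a) 1 + Finsupp.single (I (a+1)) (-1)
      else if b = a + 1 then Finsupp.single (I (a+1)) 1
      else if b = a - 1 then Finsupp.single (I a) 1
      else 0
  | S a, I b => if b = a ∨ b = a + 1 then Finsupp.single (I b) (1/2) else 0
  | I b, S a => if b = a ∨ b = a + 1 then Finsupp.single (I b) (1/2) else 0
  | I a, I b => if b = a then Finsupp.single (I a) (1/4) else 0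

/-- Boundary on basis elements: `∂ (S a) = P (a+1) - P a`, zero otherwise. -/
noncomputable def bdB : B N → EC N
  | S a => Finsupp.single (P (a+1)) 1 - Finsupp.single (P a) 1
  | _ => 0

/-- Augmentation on basis elements. -/
def epsB : B N → ℚ
  | P _ => 1
  | _ => 0

end B

/-- Bilinear extension of the basis product to `EC N`. -/
noncomputable def mu {N : ℕ} (x y : EC N) : EC N :=
  x.sum fun u cu => y.sum fun v cv => (cu * cv) • B.muB u v

/-- Linear extension of the boundary to `EC N`. -/
noncomputable def bd {N : ℕ} (x : EC N) : EC N := x.sum fun u cu => cu • B.bdB u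

/-- Augmentation `ε : EC N → ℚ`. -/
noncomputable def eps {N : ℕ} (x : EC N) : ℚ := x.sum fun u cu => cu * B.epsB u

/-- The augmentation pairing `⟨x, y⟩ = ε (μ x y)`. -/
noncomputable def pair {N : ℕ} (x y : EC N) : ℚ := eps (mu x y)

/-- The subcomplex `C_N` spanned by points and elemental sticks. -/
noncomputable def Csub (N : ℕ) : Submodule ℚ (EC N) :=
  Submodule.span ℚ
    (Set.range (fun a : ZMod N => Finsupp.single (B.P a) (1 : ℚ)) ∪
     Set.range (fun a : ZMod N => Finsupp.single (B.S a) (1 : ℚ)))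

/-- The long stick `X(p,q) = Σ_{i=p}^{q-1} S [i]`. -/
noncomputable def X (N : ℕ) (p q : ℤ) : EC N :=
  ∑ i ∈ Finset.Ico p q, Finsupp.single (B.S ((i : ℤ) : ZMod N)) (1 : ℚ)

lemma mu_add_left' {N : ℕ} (x x' y : EC N) : mu (x + x') y = mu x y + mu x' y := by
  unfold mu
  apply Finsupp.sum_add_index' <;> intros <;> simp [add_mul, add_smul, Finsupp.sum_add]

lemma mu_zero_left' {N : ℕ} (y : EC N) : mu 0 y = 0 := by simp [mu]

lemma mu_sum_left' {N : ℕ} {ι : Type*} (s : Finset ι) (f : ι → EC N) (y : EC N) :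
    mu (∑ i ∈ s, f i) y = ∑ i ∈ s, mu (f i) y := by
  classical
  induction s using Finset.cons_induction with
  | empty => simp [mu_zero_left']
  | cons i s hi ih => rw [Finset.sum_cons, Finset.sum_cons, mu_add_left', ih]

lemma mu_single_single' {N : ℕ} (u v : B N) (r s : ℚ) :
    mu (Finsupp.single u r) (Finsupp.single v s) = (r * s) • B.muB u v := by
  unfold mu
  rw [Finsupp.sum_single_index, Finsupp.sum_single_index] <;> simp

lemma cast_inj_window {N : ℕ} (hN : 0 < (N:ℤ)) (i j : ℤ) (h : |i - j| < (N:ℤ)) :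
    ((i : ℤ) : ZMod N) = ((j : ℤ) : ZMod N) ↔ i = j := by
  constructor
  · intro hij
    have hd : (N:ℤ) ∣ (j - i) := ((ZMod.intCast_eq_intCast_iff i j N).mp hij).dvd
    by_contra hne
    have : (N:ℤ) ≤ |j - i| :=
      Int.le_of_dvd (abs_pos.2 (sub_ne_zero.2 fun h' => hne h'.symm)) ((dvd_abs _ _).2 hd)
    rw [abs_sub_comm] at this
    omega
  · rintro rfl; rfl

/-- the product of a long stick and an interior point in general position
is the point. -/
theorem mu_stick_point_general_position (N : ℕ) (hN : 3 ≤ N) :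
    ∀ a c b : ℤ, a < c → c < b → b - a < (N : ℤ) →
      mu (X N a b) (Finsupp.single (B.P ((c : ℤ) : ZMod N)) (1 : ℚ))
        = Finsupp.single (B.P ((c : ℤ) : ZMod N)) (1 : ℚ) := by
  intro a c b hac hcb hba
  have hN0 : (0:ℤ) < N := by exact_mod_cast Nat.lt_of_lt_of_le (by norm_num) hN
  set P : EC N := Finsupp.single (B.P ((c : ℤ) : ZMod N)) (1 : ℚ) with hP
  rw [X, mu_sum_left']
  have step : ∀ i ∈ Finset.Ico a b,
      mu (Finsupp.single (B.S ((i : ℤ) : ZMod N)) (1:ℚ)) P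
        = if i = c ∨ i = c - 1 then Finsupp.single (B.P ((c : ℤ) : ZMod N)) (1/2 : ℚ) else 0 := by
    intro i hi
    simp only [Finset.mem_Ico] at hi
    rw [hP, mu_single_single', one_mul, one_smul]
    show (if ((i:ℤ):ZMod N) = ((c:ℤ):ZMod N) ∨ ((i:ℤ):ZMod N) = ((c:ℤ):ZMod N) - 1 then
        Finsupp.single (B.P ((c : ℤ) : ZMod N)) (1/2 : ℚ) else 0) = _
    have h1 : (((i:ℤ):ZMod N) = ((c:ℤ):ZMod N)) ↔ i = c :=
      cast_inj_window hN0 i c (by rw [abs_sub_lt_iff]; omega)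
    have hc1 : ((c:ℤ):ZMod N) - 1 = (((c - 1 : ℤ)):ZMod N) := by push_cast; ring
    have h2 : (((i:ℤ):ZMod N) = ((c:ℤ):ZMod N) - 1) ↔ i = c - 1 := by
      rw [hc1]; exact cast_inj_window hN0 i (c-1) (by rw [abs_sub_lt_iff]; omega)
    simp only [h1, h2]
  rw [Finset.sum_congr rfl step, ← Finset.sum_filter]
  have hfil : Finset.filter (fun i => i = c ∨ i = c - 1) (Finset.Ico a b) = {c - 1, c} := by
    ext i
    simp only [Finset.mem_filter, Finset.mem_Ico, Finset.mem_insert, Finset.mem_singleton]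
    omega
  rw [hfil]
  rw [Finset.sum_insert (by simp), Finset.sum_singleton, ← Finsupp.single_add]
  norm_num
  exact hP.symm
end

section
/- If the period N is odd (and N ≥ 3), the three-dimensional augmentation pairing is non-degenerate on the cubical subcomplex C3_N: for every x ∈ C3_N, if ⟨x, y⟩₃ = 0 for all y ∈ C3_N, then x = 0. -/
/-- Basis triples for the three-dimensional complex. -/
abbrev B3 (N : ℕ) : Type := B N × B N × B N

/-- The enlarged three-dimensional chain complex: free ℚ-vector space on `B3 N`. -/
abbrev E3 (N : ℕ) : Type := B3 N →₀ ℚ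

/-- Codimension of a basis triple. -/
def cod3 {N : ℕ} (u : B3 N) : ℕ := u.1.cod + u.2.1.cod + u.2.2.cod

/-- Basis triple viewed in `E3 N`. -/
noncomputable def e3 {N : ℕ} (u : B3 N) : E3 N := Finsupp.single u 1

/-- Trilinear map `EC N → EC N → EC N → E3 N`, `x ⊗ y ⊗ z`. -/
noncomputable def t3 {N : ℕ} (x y z : EC N) : E3 N :=
  x.sum fun u₁ c₁ => y.sum fun u₂ c₂ => z.sum fun u₃ c₃ =>
    Finsupp.single (u₁, u₂, u₃) (c₁ * c₂ * c₃)

/-- The three-dimensional intersection product on basis triples, with Koszul sign. -/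
noncomputable def mu3B {N : ℕ} (u v : B3 N) : E3 N :=
  ((-1 : ℚ) ^ (u.2.1.cod * v.1.cod + u.2.2.cod * v.1.cod + u.2.2.cod * v.2.1.cod)) •
    t3 (B.muB u.1 v.1) (B.muB u.2.1 v.2.1) (B.muB u.2.2 v.2.2)

/-- Bilinear extension of the three-dimensional product to `E3 N`. -/
noncomputable def mu3 {N : ℕ} (x y : E3 N) : E3 N :=
  x.sum fun u cu => y.sum fun v cv => (cu * cv) • mu3B u v

/-- The three-dimensional boundary on basis triples. -/
noncomputable def bd3B {N : ℕ} (u : B3 N) : E3 N :=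
  t3 (B.bdB u.1) (B.e u.2.1) (B.e u.2.2)
    + ((-1 : ℚ) ^ u.1.cod) • t3 (B.e u.1) (B.bdB u.2.1) (B.e u.2.2)
    + ((-1 : ℚ) ^ (u.1.cod + u.2.1.cod)) • t3 (B.e u.1) (B.e u.2.1) (B.bdB u.2.2)

/-- Linear extension of the three-dimensional boundary to `E3 N`. -/
noncomputable def bd3 {N : ℕ} (x : E3 N) : E3 N := x.sum fun u cu => cu • bd3B u

/-- The three-dimensional augmentation `ε₃`. -/
noncomputable def eps3 {N : ℕ} (x : E3 N) : ℚ :=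
  x.sum fun u cu => cu * (B.epsB u.1 * B.epsB u.2.1 * B.epsB u.2.2)

/-- The three-dimensional augmentation pairing. -/
noncomputable def pair3 {N : ℕ} (x y : E3 N) : ℚ := eps3 (mu3 x y)

/-- Is a basis element an infinitesimal stick? -/
def isI {N : ℕ} : B N → Bool
  | .I _ => true
  | _ => false

/-- Is a basis element a point? -/
def isP {N : ℕ} : B N → Bool
  | .P _ => true
  | _ => false

/-- Number of infinitesimal components of a basis triple. -/
def nI {N : ℕ} (u : B3 N) : ℕ :=
  (if isI u.1 then 1 else 0) + (if isI u.2.1 then 1 else 0) + (if isI u.2.2 then 1 else 0)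

/-- Number of point components of a basis triple. -/
def nP {N : ℕ} (u : B3 N) : ℕ :=
  (if isP u.1 then 1 else 0) + (if isP u.2.1 then 1 else 0) + (if isP u.2.2 then 1 else 0)

/-- Membership of a basis triple in the generating set of `FC_N`: either no infinitesimal
component and at least one point component, or exactly one infinitesimal component and
two point components. -/
def inFC {N : ℕ} (u : B3 N) : Prop := (nI u = 0 ∧ 1 ≤ nP u) ∨ (nI u = 1 ∧ nP u = 2)

/-- The subcomplex `FC_N` of `E3 N`. -/
noncomputable def FCsub (N : ℕ) : Submodule ℚ (E3 N) :=
  Submodule.span ℚ {x : E3 N | ∃ u : B3 N, inFC u ∧ x = e3 u}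

/-- A basis triple has no infinitesimal component. -/
def noInf {N : ℕ} (u : B3 N) : Prop := nI u = 0

/-- The three-dimensional cubical subcomplex `C3_N` of `E3 N`. -/
noncomputable def C3sub (N : ℕ) : Submodule ℚ (E3 N) :=
  Submodule.span ℚ {x : E3 N | ∃ u : B3 N, noInf u ∧ x = e3 u}

namespace Aux
variable {N : ℕ}

lemma eps_zero : eps (0 : EC N) = 0 := Finsupp.sum_zero_index

lemma eps_single (b : B N) (c : ℚ) : eps (Finsupp.single b c) = c * B.epsB b :=
  Finsupp.sum_single_index (by simp)

lemma eps_add (x y : EC N) : eps (x + y) = eps x + eps y :=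
  Finsupp.sum_add_index' (by simp) (fun _ _ _ => add_mul _ _ _)

lemma epsmu_PP (a b : ZMod N) : eps (B.muB (B.P a) (B.P b)) = 0 := by
  simp [B.muB, eps_zero]

lemma epsmu_PS (a b : ZMod N) :
    eps (B.muB (B.P a) (B.S b)) = if b = a ∨ b = a - 1 then 1/2 else 0 := by
  simp only [B.muB]
  split_ifs <;> simp [eps_single, eps_zero, B.epsB]

lemma epsmu_SP (a b : ZMod N) :
    eps (B.muB (B.S a) (B.P b)) = if a = b ∨ a = b - 1 then 1/2 else 0 := by
  simp only [B.muB]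
  split_ifs <;> simp [eps_single, eps_zero, B.epsB]

lemma epsmu_SS (a b : ZMod N) : eps (B.muB (B.S a) (B.S b)) = 0 := by
  simp only [B.muB]
  split_ifs <;> simp [eps_add, eps_single, eps_zero, B.epsB, ← Finsupp.single_neg]

lemma key (hN : 3 ≤ N) (hodd : Odd N) (k : ZMod N) :
    ((-1:ℚ) ^ k.val + (-1) ^ ((k - 1).val)) = if k = 0 then 2 else 0 := by
  haveI : NeZero N := ⟨by omega⟩
  obtain ⟨m, hm⟩ := hodd
  by_cases hk : k = 0
  · subst hk
    have h1 : ((N - 1 : ℕ) : ZMod N) = 0 - 1 := by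
      rw [Nat.cast_sub (by omega), ZMod.natCast_self]
      ring
    rw [if_pos rfl, ← h1, ZMod.val_cast_of_lt (by omega), ZMod.val_zero, pow_zero]
    have he : Even (N - 1) := ⟨m, by omega⟩
    rw [he.neg_one_pow]
    norm_num
  · rw [if_neg hk]
    have hval : 1 ≤ k.val := by
      have := (ZMod.val_eq_zero k).not.mpr hk
      omega
    have h2 : (k - 1 : ZMod N) = ((k.val - 1 : ℕ) : ZMod N) := by
      rw [Nat.cast_sub hval, ZMod.natCast_val, ZMod.cast_id]
      push_cast
      ring
    have hlt : k.val < N := ZMod.val_lt k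
    rw [h2, ZMod.val_cast_of_lt (by omega)]
    obtain ⟨p, hp⟩ : ∃ p, k.val = p + 1 := ⟨k.val - 1, by omega⟩
    rw [hp]
    simp [pow_succ]

end Aux
namespace Aux
variable {N : ℕ}

/-- The dual basis element type map. -/
def dualT : B N → ZMod N → B N
  | B.P _, c => B.S c
  | B.S _, c => B.P c
  | B.I _, c => B.P c

/-- The dual coefficients. -/
noncomputable def dualC : B N → ZMod N → ℚ
  | B.P a, c => (-1) ^ ((c - a).val)
  | B.S a, c => (-1) ^ ((a - c).val)
  | B.I _, _ => 0

lemma isI_dualT (u : B N) (c : ZMod N) : isI (dualT u c) = false := by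
  cases u <;> rfl

def dcod : B N → ℕ
  | B.P _ => 0
  | _ => 1

lemma cod_dualT (u : B N) (c : ZMod N) : (dualT u c).cod = dcod u := by
  cases u <;> rfl

/-- The key one-dimensional duality computation. -/
lemma dual_sum [NeZero N] (hN : 3 ≤ N) (hodd : Odd N) (u w : B N)
    (hu : ¬ isI u) (hw : ¬ isI w) :
    ∑ c : ZMod N, dualC u c * eps (B.muB w (dualT u c)) = if w = u then 1 else 0 := by
  haveI : Fact (1 < N) := ⟨by omega⟩
  have h10 : (1 : ZMod N) ≠ 0 := by
    intro h
    have := congrArg ZMod.val h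
    rw [ZMod.val_one, ZMod.val_zero] at this
    omega
  match u, w with
  | B.I _, _ => exact absurd rfl hu
  | B.P _, B.I _ => exact absurd rfl hw
  | B.S _, B.I _ => exact absurd rfl hw
  | B.P a, B.S b =>
    simp only [dualT, dualC, epsmu_SS, mul_zero, Finset.sum_const_zero]
    simp
  | B.S a, B.P b =>
    simp only [dualT, dualC, epsmu_PP, mul_zero, Finset.sum_const_zero]
    simp
  | B.P a, B.P b =>
    simp only [dualT, dualC, epsmu_PS]
    have hbb : b ≠ b - 1 := by
      intro h
      apply h10
      have : b - (b - 1) = 0 := by rw [← h]; ring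
      calc (1 : ZMod N) = b - (b - 1) := by ring
        _ = 0 := this
    have hsplit : ∀ c : ZMod N,
        (-1:ℚ) ^ ((c - a).val) * (if c = b ∨ c = b - 1 then 1/2 else 0)
          = (if c = b then (-1:ℚ) ^ ((c - a).val) * (1/2) else 0)
            + (if c = b - 1 then (-1:ℚ) ^ ((c - a).val) * (1/2) else 0) := by
      intro c
      by_cases h1 : c = b <;> by_cases h2 : c = b - 1 <;> simp_all
    rw [Finset.sum_congr rfl fun c _ => hsplit c, Finset.sum_add_distrib,
      Finset.sum_ite_eq' Finset.univ b, Finset.sum_ite_eq' Finset.univ (b - 1)]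
    simp only [Finset.mem_univ, if_pos]
    have h3 : b - 1 - a = b - a - 1 := by ring
    have hk := key hN hodd (b - a)
    rw [h3]
    have hPP : (if B.P b = B.P a then (1:ℚ) else 0) = if b - a = 0 then 1 else 0 := by
      simp [B.P.injEq, sub_eq_zero]
    rw [hPP]
    split_ifs at hk ⊢ <;> linarith
  | B.S a, B.S b =>
    simp only [dualT, dualC, epsmu_SP]
    have hbb : b ≠ b + 1 := by
      intro h
      apply h10
      have : b + 1 - b = 0 := by rw [← h]; ring
      calc (1 : ZMod N) = b + 1 - b := by ring
        _ = 0 := this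
    have hsplit : ∀ c : ZMod N,
        (-1:ℚ) ^ ((a - c).val) * (if b = c ∨ b = c - 1 then 1/2 else 0)
          = (if c = b then (-1:ℚ) ^ ((a - c).val) * (1/2) else 0)
            + (if c = b + 1 then (-1:ℚ) ^ ((a - c).val) * (1/2) else 0) := by
      intro c
      by_cases h1 : c = b <;> by_cases h2 : c = b + 1
      · rw [h1] at h2; exact absurd h2 hbb
      · subst h1
        rw [if_pos (Or.inl rfl), if_pos rfl, if_neg h2, add_zero]
      · subst h2
        rw [if_pos (Or.inr (by ring)), if_neg h1, if_pos rfl, zero_add]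
      · have hcond : ¬(b = c ∨ b = c - 1) := by
          rintro (h | h)
          · exact h1 h.symm
          · exact h2 (by rw [h]; ring)
        rw [if_neg hcond, if_neg h1, if_neg h2, mul_zero, add_zero]
    rw [Finset.sum_congr rfl fun c _ => hsplit c, Finset.sum_add_distrib,
      Finset.sum_ite_eq' Finset.univ b, Finset.sum_ite_eq' Finset.univ (b + 1)]
    simp only [Finset.mem_univ, if_pos]
    have h3 : a - (b + 1) = a - b - 1 := by ring
    have hk := key hN hodd (a - b)
    rw [h3]
    have hSS : (if B.S b = B.S a then (1:ℚ) else 0) = if a - b = 0 then 1 else 0 := by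
      simp [B.S.injEq, sub_eq_zero, eq_comm]
    rw [hSS]
    split_ifs at hk ⊢ <;> linarith
end Aux
namespace Aux
variable {N : ℕ}

lemma eps3_eq (x : E3 N) :
    eps3 x = Finsupp.linearCombination ℚ
      (fun u : B3 N => B.epsB u.1 * B.epsB u.2.1 * B.epsB u.2.2) x := by
  rw [Finsupp.linearCombination_apply]
  rfl

lemma eps3_zero : eps3 (0 : E3 N) = 0 := Finsupp.sum_zero_index

lemma eps3_add (x y : E3 N) : eps3 (x + y) = eps3 x + eps3 y := by
  rw [eps3_eq, eps3_eq, eps3_eq, map_add]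

lemma eps3_smul (a : ℚ) (x : E3 N) : eps3 (a • x) = a * eps3 x := by
  rw [eps3_eq, eps3_eq, map_smul, smul_eq_mul]

lemma eps3_single (v : B3 N) (c : ℚ) :
    eps3 (Finsupp.single v c) = c * (B.epsB v.1 * B.epsB v.2.1 * B.epsB v.2.2) :=
  Finsupp.sum_single_index (by simp)

lemma eps3_finsupp_sum {α : Type*} (s : α →₀ ℚ) (f : α → ℚ → E3 N) :
    eps3 (s.sum f) = s.sum fun a c => eps3 (f a c) := by
  rw [eps3_eq, map_finsuppSum]
  exact Finsupp.sum_congr fun a _ => (eps3_eq _).symm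

lemma eps3_t3 (x y z : EC N) : eps3 (t3 x y z) = eps x * eps y * eps z := by
  unfold t3
  rw [eps3_finsupp_sum]
  simp only [eps3_finsupp_sum, eps3_single]
  simp only [eps, Finsupp.sum]
  rw [Finset.sum_mul_sum, Finset.sum_mul_sum]
  refine Finset.sum_congr rfl fun u1 _ => ?_
  rw [Finset.sum_comm]
  refine Finset.sum_congr rfl fun u3 _ => ?_
  rw [Finset.sum_mul]
  exact Finset.sum_congr rfl fun u2 _ => by ring

lemma eps3_mu3B (w v : B3 N) :
    eps3 (mu3B w v) =
      ((-1:ℚ) ^ (w.2.1.cod * v.1.cod + w.2.2.cod * v.1.cod + w.2.2.cod * v.2.1.cod)) *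
        (eps (B.muB w.1 v.1) * eps (B.muB w.2.1 v.2.1) * eps (B.muB w.2.2 v.2.2)) := by
  rw [mu3B, eps3_smul, eps3_t3]

lemma mu3_sum_left (x y : E3 N) :
    mu3 x y = x.sum fun w cw => cw • mu3 (Finsupp.single w 1) y := by
  unfold mu3
  refine Finsupp.sum_congr fun w _ => ?_
  rw [Finsupp.sum_single_index (by simp [Finsupp.sum]), Finsupp.smul_sum]
  exact Finsupp.sum_congr fun v _ => by rw [one_mul, smul_smul]

lemma pair3_sum_left (x y : E3 N) :
    pair3 x y = x.sum fun w cw => cw * pair3 (Finsupp.single w 1) y := by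
  unfold pair3
  rw [mu3_sum_left, eps3_finsupp_sum]
  exact Finsupp.sum_congr fun w _ => eps3_smul _ _

lemma mu3_add_right (x y z : E3 N) : mu3 x (y + z) = mu3 x y + mu3 x z := by
  unfold mu3
  rw [← Finsupp.sum_add]
  exact Finsupp.sum_congr fun u _ =>
    Finsupp.sum_add_index' (fun v => by simp) (fun v c1 c2 => by rw [mul_add, add_smul])

noncomputable def pairHom (w : B3 N) : E3 N →+ ℚ :=
  AddMonoidHom.mk' (fun y => pair3 (Finsupp.single w 1) y)
    (fun y z => by unfold pair3; rw [mu3_add_right, eps3_add])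

lemma pair3_single_single (w v : B3 N) (c : ℚ) :
    pair3 (Finsupp.single w 1) (Finsupp.single v c) = c * eps3 (mu3B w v) := by
  unfold pair3 mu3
  rw [Finsupp.sum_single_index (by simp [Finsupp.sum])]
  rw [Finsupp.sum_single_index (by simp), eps3_smul, one_mul]

lemma triple_factor [NeZero N] (σ : ℚ) (a1 a2 a3 b1 b2 b3 : ZMod N → ℚ) :
    (∑ c1 : ZMod N, ∑ c2 : ZMod N, ∑ c3 : ZMod N,
        (a1 c1 * a2 c2 * a3 c3) * (σ * (b1 c1 * b2 c2 * b3 c3)))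
      = σ * ((∑ c : ZMod N, a1 c * b1 c) * ((∑ c : ZMod N, a2 c * b2 c) *
          (∑ c : ZMod N, a3 c * b3 c))) := by
  have h1 : ∀ c1 c2 : ZMod N,
      (∑ c3 : ZMod N, (a1 c1 * a2 c2 * a3 c3) * (σ * (b1 c1 * b2 c2 * b3 c3)))
        = (a1 c1 * b1 c1) * (a2 c2 * b2 c2) * σ * (∑ c : ZMod N, a3 c * b3 c) := by
    intro c1 c2
    rw [Finset.mul_sum]
    exact Finset.sum_congr rfl fun c3 _ => by ring
  have h2 : ∀ c1 : ZMod N,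
      (∑ c2 : ZMod N, (a1 c1 * b1 c1) * (a2 c2 * b2 c2) * σ *
          (∑ c : ZMod N, a3 c * b3 c))
        = (a1 c1 * b1 c1) * σ * ((∑ c : ZMod N, a2 c * b2 c) *
            (∑ c : ZMod N, a3 c * b3 c)) := by
    intro c1
    conv_rhs => rw [Finset.sum_mul, Finset.mul_sum]
    exact Finset.sum_congr rfl fun c2 _ => by ring
  have step1 :
      (∑ c1 : ZMod N, ∑ c2 : ZMod N, ∑ c3 : ZMod N,
          (a1 c1 * a2 c2 * a3 c3) * (σ * (b1 c1 * b2 c2 * b3 c3)))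
        = ∑ c1 : ZMod N, (a1 c1 * b1 c1) * σ * ((∑ c : ZMod N, a2 c * b2 c) *
            (∑ c : ZMod N, a3 c * b3 c)) :=
    Finset.sum_congr rfl fun c1 _ =>
      ((Finset.sum_congr rfl fun c2 _ => h1 c1 c2).trans (h2 c1))
  rw [step1]
  conv_rhs => rw [Finset.sum_mul, Finset.mul_sum]
  exact Finset.sum_congr rfl fun c1 _ => by ring

end Aux
namespace Aux
variable {N : ℕ}

lemma noInf_iff (w : B3 N) : noInf w ↔ (¬ isI w.1 ∧ ¬ isI w.2.1 ∧ ¬ isI w.2.2) := by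
  unfold noInf nI
  split_ifs <;> simp_all

lemma pair3_e_dual [NeZero N] (hN : 3 ≤ N) (hodd : Odd N) (u w : B3 N)
    (hu1 : ¬ isI u.1) (hu2 : ¬ isI u.2.1) (hu3 : ¬ isI u.2.2)
    (hw1 : ¬ isI w.1) (hw2 : ¬ isI w.2.1) (hw3 : ¬ isI w.2.2)
    (y : E3 N)
    (hy : y = ∑ c1 : ZMod N, ∑ c2 : ZMod N, ∑ c3 : ZMod N,
        Finsupp.single ((dualT u.1 c1, dualT u.2.1 c2, dualT u.2.2 c3) : B3 N)
          (dualC u.1 c1 * dualC u.2.1 c2 * dualC u.2.2 c3)) :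
    pair3 (Finsupp.single w 1) y
      = ((-1:ℚ) ^ (w.2.1.cod * dcod u.1 + w.2.2.cod * dcod u.1 + w.2.2.cod * dcod u.2.1)) *
          (if w = u then 1 else 0) := by
  subst hy
  have hP : ∀ z : E3 N, pair3 (Finsupp.single w 1) z = pairHom w z := fun _ => rfl
  rw [hP, map_sum]
  simp only [map_sum]
  simp only [← hP, pair3_single_single, eps3_mu3B, cod_dualT]
  rw [triple_factor
    ((-1:ℚ) ^ (w.2.1.cod * dcod u.1 + w.2.2.cod * dcod u.1 + w.2.2.cod * dcod u.2.1))
    (dualC u.1) (dualC u.2.1) (dualC u.2.2)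
    (fun c => eps (B.muB w.1 (dualT u.1 c)))
    (fun c => eps (B.muB w.2.1 (dualT u.2.1 c)))
    (fun c => eps (B.muB w.2.2 (dualT u.2.2 c)))]
  rw [dual_sum hN hodd u.1 w.1 hu1 hw1, dual_sum hN hodd u.2.1 w.2.1 hu2 hw2,
      dual_sum hN hodd u.2.2 w.2.2 hu3 hw3]
  congr 1
  by_cases h1 : w.1 = u.1 <;> by_cases h2 : w.2.1 = u.2.1 <;> by_cases h3 : w.2.2 = u.2.2 <;>
    simp [Prod.ext_iff, h1, h2, h3]

end Aux

open Aux

/-- for odd period, the three-dimensional augmentation pairing is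
non-degenerate on the cubical subcomplex `C3_N`. -/
theorem pair3_nondegenerate (N : ℕ) (hN : 3 ≤ N) (hodd : Odd N) :
    ∀ x ∈ C3sub N, (∀ y ∈ C3sub N, pair3 x y = 0) → x = 0 := by
  haveI : NeZero N := ⟨by omega⟩
  intro x hx hpair
  have hsupp : ∀ w : B3 N, ¬ noInf w → x w = 0 := by
    clear hpair
    induction hx using Submodule.span_induction with
    | mem z hz =>
      obtain ⟨v, hv, rfl⟩ := hz
      intro w hw
      rw [e3, Finsupp.single_apply, if_neg]
      intro h
      exact hw (h ▸ hv)
    | zero => intro w _; rfl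
    | add a b _ _ ha hb =>
      intro w hw
      rw [Finsupp.add_apply, ha w hw, hb w hw, add_zero]
    | smul a t _ ht =>
      intro w hw
      rw [Finsupp.smul_apply, ht w hw, smul_zero]
  ext u
  rw [Finsupp.coe_zero, Pi.zero_apply]
  by_cases hnu : noInf u
  · obtain ⟨hu1, hu2, hu3⟩ := (noInf_iff u).mp hnu
    set y : E3 N := ∑ c1 : ZMod N, ∑ c2 : ZMod N, ∑ c3 : ZMod N,
        Finsupp.single ((dualT u.1 c1, dualT u.2.1 c2, dualT u.2.2 c3) : B3 N)
          (dualC u.1 c1 * dualC u.2.1 c2 * dualC u.2.2 c3) with hydef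
    have hy : y ∈ C3sub N := by
      rw [hydef]
      refine Submodule.sum_mem _ fun c1 _ => Submodule.sum_mem _ fun c2 _ =>
        Submodule.sum_mem _ fun c3 _ => ?_
      have heq : Finsupp.single ((dualT u.1 c1, dualT u.2.1 c2, dualT u.2.2 c3) : B3 N)
          (dualC u.1 c1 * dualC u.2.1 c2 * dualC u.2.2 c3)
          = (dualC u.1 c1 * dualC u.2.1 c2 * dualC u.2.2 c3) •
              e3 ((dualT u.1 c1, dualT u.2.1 c2, dualT u.2.2 c3) : B3 N) := by
        rw [e3, Finsupp.smul_single, smul_eq_mul, mul_one]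
      rw [heq]
      refine Submodule.smul_mem _ _ (Submodule.subset_span ⟨_, ?_, rfl⟩)
      exact (noInf_iff _).mpr ⟨by simp [isI_dualT], by simp [isI_dualT], by simp [isI_dualT]⟩
    have h0 := hpair y hy
    rw [pair3_sum_left] at h0
    have hsum : (x.sum fun w cw => cw * pair3 (Finsupp.single w 1) y)
        = x u * pair3 (Finsupp.single u 1) y := by
      rw [Finsupp.sum]
      refine Finset.sum_eq_single u ?_ ?_
      · intro w hwmem hwne
        have hwn : noInf w := by
          by_contra hc
          exact (Finsupp.mem_support_iff.mp hwmem) (hsupp w hc)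
        obtain ⟨hw1, hw2, hw3⟩ := (noInf_iff w).mp hwn
        rw [pair3_e_dual hN hodd u w hu1 hu2 hu3 hw1 hw2 hw3 y hydef, if_neg hwne,
          mul_zero, mul_zero]
      · intro hnotmem
        rw [Finsupp.notMem_support_iff.mp hnotmem, zero_mul]
    rw [hsum, pair3_e_dual hN hodd u u hu1 hu2 hu3 hu1 hu2 hu3 y hydef, if_pos rfl,
      mul_one] at h0
    rcases mul_eq_zero.mp h0 with h | h
    · exact h
    · exact absurd h (pow_ne_zero _ (by norm_num))
  · exact hsupp u hnu
end
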